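/- Let K be a field, A = K[x_1,…,x_n] with n > 1 (so dim_K A_1 = n). If H is a k-dimensional subspace of A_1, then the subspace ⟨A_1 H⟩ of A_2 spanned by all products fh with f ∈ A_1 and h ∈ H has dimension kn − binom(k, 2). -/

import Mathlib

open MvPolynomial
set_option maxHeartbeats 1000000
set_option synthInstance.maxHeartbeats 1000000

lemma deg_one {σ : Type*} (d : σ →₀ ℕ) (hd : d.degree = 1) : ∃ i, d = Finsupp.single i 1 := by
  classical
  rw [Finsupp.degree_apply] at hd
  obtain ⟨i, hi⟩ : d.support.Nonempty := by
    rw [Finset.nonempty_iff_ne_empty]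
    intro h
    rw [h] at hd; simp at hd
  refine ⟨i, ?_⟩
  have hdi : 1 ≤ d i := Nat.one_le_iff_ne_zero.2 (Finsupp.mem_support_iff.1 hi)
  have hsum : d i ≤ ∑ j ∈ d.support, d j := Finset.single_le_sum (fun _ _ => Nat.zero_le _) hi
  have hdi1 : d i = 1 := le_antisymm (hd ▸ hsum) hdi
  ext j
  rcases eq_or_ne j i with rfl | hj
  · simp [hdi1]
  · simp only [Finsupp.single_apply, if_neg (Ne.symm hj)]
    by_contra h
    have hjs : j ∈ d.support := Finsupp.mem_support_iff.2 h
    have h1 : ∑ m ∈ d.support, d m = d i + ∑ m ∈ d.support.erase i, d m :=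
      (Finset.add_sum_erase _ _ hi).symm
    have h2 : d j ≤ ∑ m ∈ d.support.erase i, d m :=
      Finset.single_le_sum (fun _ _ => Nat.zero_le _) (Finset.mem_erase.2 ⟨hj, hjs⟩)
    omega

lemma span_X (K : Type*) [Field K] (n : ℕ) :
    homogeneousSubmodule (Fin n) K 1 = Submodule.span K (Set.range (X : Fin n → MvPolynomial (Fin n) K)) := by
  apply le_antisymm
  · intro p hp
    rw [mem_homogeneousSubmodule] at hp
    rw [p.as_sum]
    refine Submodule.sum_mem _ fun d hd => ?_
    obtain ⟨i, rfl⟩ := deg_one d (by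
      have := hp (MvPolynomial.mem_support_iff.1 hd)
      simpa [Finsupp.degree_apply, Finsupp.sum, Finsupp.weight, Finsupp.linearCombination] using this)
    have : (monomial (Finsupp.single i 1)) (coeff (Finsupp.single i 1) p)
        = (coeff (Finsupp.single i 1) p) • X i := by
      rw [show (X i : MvPolynomial (Fin n) K) = monomial (Finsupp.single i 1) 1 from rfl,
        smul_monomial, smul_eq_mul, mul_one]
    rw [this]
    exact Submodule.smul_mem _ _ (Submodule.subset_span ⟨i, rfl⟩)
  · rw [Submodule.span_le]
    rintro _ ⟨i, rfl⟩
    exact isHomogeneous_X K i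

lemma two_choose (k : ℕ) : k.choose 2 * 2 = k * (k - 1) := by
  rw [Nat.choose_two_right]
  refine Nat.div_mul_cancel ?_
  cases k with
  | zero => simp
  | succ s => simpa [Nat.succ_sub_one, mul_comm] using (Nat.even_mul_succ_self s).two_dvd

lemma pair_eq {σ : Type*} {u w u' w' : σ}
    (h : Finsupp.single u 1 + Finsupp.single w 1
        = Finsupp.single u' 1 + Finsupp.single w' (1 : ℕ)) :
    (u = u' ∧ w = w') ∨ (u = w' ∧ w = u') := by
  classical
  have hu : u = u' ∨ u = w' := by
    by_contra hc
    push_neg at hc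
    have := DFunLike.congr_fun h u
    simp [Finsupp.single_apply, hc.1, hc.2, Ne.symm hc.1, Ne.symm hc.2] at this
  rcases hu with rfl | rfl
  · left
    refine ⟨rfl, ?_⟩
    have h2 : Finsupp.single w 1 = Finsupp.single w' (1:ℕ) := by
      exact add_left_cancel h
    exact Finsupp.single_left_injective one_ne_zero h2
  · right
    refine ⟨rfl, ?_⟩
    have h2 : Finsupp.single w 1 = Finsupp.single u' (1:ℕ) := by
      have h' : Finsupp.single u 1 + Finsupp.single w 1
          = Finsupp.single u 1 + Finsupp.single u' (1:ℕ) := by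
        rw [h, add_comm]
      exact add_left_cancel h'
    exact Finsupp.single_left_injective one_ne_zero h2

theorem dim_A1H (K : Type*) [Field K] (n k : ℕ) (hn : 1 < n)
    (H : Submodule K (MvPolynomial (Fin n) K))
    (hH : H ≤ homogeneousSubmodule (Fin n) K 1)
    (hk : Module.finrank K H = k) :
    Module.finrank K
        (homogeneousSubmodule (Fin n) K 1 * H :
          Submodule K (MvPolynomial (Fin n) K)) =
      k * n - k.choose 2 := by
  classical
  set A1 := homogeneousSubmodule (Fin n) K 1 with hA1
  have hspan : A1 = Submodule.span K (Set.range (X : Fin n → MvPolynomial (Fin n) K)) :=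
    span_X K n
  have liX : LinearIndependent K (X : Fin n → MvPolynomial (Fin n) K) :=
    MvPolynomial.linearIndependent_X _ _
  let bX : Module.Basis (Fin n) K A1 := (Module.Basis.span liX).map (LinearEquiv.ofEq _ _ hspan.symm)
  have bX_coe : ∀ i, (bX i : MvPolynomial (Fin n) K) = X i := by
    intro i
    simp [bX, Module.Basis.span_apply]
  haveI : FiniteDimensional K A1 := Module.Finite.of_basis bX
  have hrA1 : Module.finrank K A1 = n := by
    rw [Module.finrank_eq_card_basis bX, Fintype.card_fin]
  set H' : Submodule K A1 := H.comap A1.subtype with hH'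
  have hrH' : Module.finrank K H' = k := by
    rw [← hk]
    exact (Submodule.comapSubtypeEquivOfLe hH).finrank_eq
  obtain ⟨W, hW⟩ := Submodule.exists_isCompl H'
  have hkW : Module.finrank K H' + Module.finrank K W = n := by
    rw [Submodule.finrank_add_eq_of_isCompl hW, hrA1]
  have hkn : k ≤ n := by omega
  have hrW : Module.finrank K W = n - k := by omega
  haveI : FiniteDimensional K H' := inferInstance
  haveI : FiniteDimensional K W := inferInstance
  haveI : Module.Free K H' := Module.Free.of_divisionRing K H'
  haveI : Module.Free K W := Module.Free.of_divisionRing K W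
  let bH : Module.Basis (Fin k) K H' := Module.finBasisOfFinrankEq K H' hrH'
  let bW : Module.Basis (Fin (n - k)) K W := Module.finBasisOfFinrankEq K W hrW
  let b : Module.Basis (Fin k ⊕ Fin (n - k)) K A1 :=
    (bH.prod bW).map (Submodule.prodEquivOfIsCompl H' W hW)
  let g : Fin k ⊕ Fin (n - k) → MvPolynomial (Fin n) K := fun i => ((b i : A1) : _)
  have hb_inl : ∀ j, (b (Sum.inl j) : A1) = ((bH j : A1)) := by
    intro j
    simp [b, Module.Basis.prod_apply, Submodule.coe_prodEquivOfIsCompl]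
  have li_g : LinearIndependent K g :=
    b.linearIndependent.map' A1.subtype (Submodule.ker_subtype A1)
  have hgspan : Submodule.span K (Set.range g) = A1 := by
    have : Set.range g = A1.subtype '' Set.range b := by
      rw [← Set.range_comp]; rfl
    rw [this, Submodule.span_image, b.span_eq, Submodule.map_top, Submodule.range_subtype]
  have hHspan : Submodule.span K (Set.range fun j => g (Sum.inl j)) = H := by
    have : (fun j => g (Sum.inl j)) = (A1.subtype ∘ₗ H'.subtype) ∘ bH := by
      funext j
      simp [g, hb_inl j]
    rw [this, Set.range_comp, Submodule.span_image, bH.span_eq, Submodule.map_top,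
      LinearMap.range_comp, Submodule.range_subtype]
    show Submodule.map A1.subtype (Submodule.comap A1.subtype H) = H
    rw [Submodule.map_comap_subtype]
    exact inf_eq_right.2 hH
  have hnkk : k + (n - k) = n := by omega
  let e : (Fin k ⊕ Fin (n - k)) ≃ Fin n := finSumFinEquiv.trans (finCongr hnkk)
  have he_inl : ∀ a : Fin k, (e (Sum.inl a) : ℕ) = (a : ℕ) := by
    intro a; simp [e]
  have he_inr : ∀ w : Fin (n - k), (e (Sum.inr w) : ℕ) = k + (w : ℕ) := by
    intro w; simp [e]
  let L : A1 ≃ₗ[K] A1 := b.equiv bX e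
  let c : Fin n → MvPolynomial (Fin n) K := fun i => ((L (bX i) : A1) : _)
  let ψ : MvPolynomial (Fin n) K →ₐ[K] MvPolynomial (Fin n) K := aeval c
  have hF : (ψ.toLinearMap ∘ₗ A1.subtype) = (A1.subtype ∘ₗ (L : A1 →ₗ[K] A1)) := by
    apply Module.Basis.ext bX
    intro i
    simp only [LinearMap.comp_apply, Submodule.subtype_apply, bX_coe i]
    show ψ (X i) = _
    simp [ψ, aeval_X, c]
  have hpsi_g : ∀ i, ψ (g i) = X (e i) := by
    intro i
    have h1 : ψ (g i) = (ψ.toLinearMap ∘ₗ A1.subtype) (b i) := rfl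
    rw [h1, hF]
    simp only [LinearMap.comp_apply, LinearEquiv.coe_coe, Submodule.subtype_apply]
    rw [show L (b i) = bX (e i) from b.equiv_apply i bX e, bX_coe]
  let J := (Σ a : Fin k, Fin ((a : ℕ) + 1)) ⊕ (Fin (n - k) × Fin k)
  let low : (Σ a : Fin k, Fin ((a : ℕ) + 1)) → Fin k := fun p =>
    ⟨(p.2 : ℕ), lt_of_le_of_lt (Nat.lt_succ_iff.1 p.2.2) p.1.2⟩
  let v : J → MvPolynomial (Fin n) K := fun j =>
    match j with
    | Sum.inl p => g (Sum.inl (low p)) * g (Sum.inl p.1)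
    | Sum.inr (w, j) => g (Sum.inr w) * g (Sum.inl j)
  have hv_span : Submodule.span K (Set.range v) = A1 * H := by
    rw [← hgspan, ← hHspan, Submodule.span_mul_span]
    apply le_antisymm
    · rw [Submodule.span_le]
      rintro _ ⟨j, rfl⟩
      apply Submodule.subset_span
      rcases j with p | ⟨w, j⟩
      · exact ⟨g (Sum.inl (low p)), ⟨_, rfl⟩, g (Sum.inl p.1), ⟨_, rfl⟩, rfl⟩
      · exact ⟨g (Sum.inr w), ⟨_, rfl⟩, g (Sum.inl j), ⟨_, rfl⟩, rfl⟩
    · rw [Submodule.span_le]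
      rintro _ ⟨x, ⟨i, rfl⟩, y, ⟨j, rfl⟩, rfl⟩
      apply Submodule.subset_span
      rcases i with a | w
      · rcases le_or_gt (j : ℕ) (a : ℕ) with hja | haj
        · refine ⟨Sum.inl ⟨a, ⟨(j : ℕ), Nat.lt_succ_iff.2 hja⟩⟩, ?_⟩
          show g (Sum.inl (low ⟨a, _⟩)) * g (Sum.inl a) = g (Sum.inl a) * g (Sum.inl j)
          rw [mul_comm]
        · refine ⟨Sum.inl ⟨j, ⟨(a : ℕ), Nat.lt_succ_iff.2 haj.le⟩⟩, ?_⟩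
          show g (Sum.inl (low ⟨j, _⟩)) * g (Sum.inl j) = g (Sum.inl a) * g (Sum.inl j)
          rfl
      · exact ⟨Sum.inr (w, j), rfl⟩
  let M : J → (Fin n →₀ ℕ) := fun j =>
    match j with
    | Sum.inl p => Finsupp.single (e (Sum.inl (low p))) 1 + Finsupp.single (e (Sum.inl p.1)) 1
    | Sum.inr (w, j) => Finsupp.single (e (Sum.inr w)) 1 + Finsupp.single (e (Sum.inl j)) 1
  have Minj : Function.Injective M := by
    rintro (⟨a, t⟩ | ⟨w, j⟩) (⟨a', t'⟩ | ⟨w', j'⟩) hMe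
    · have := pair_eq hMe
      have ht : ((low ⟨a, t⟩ : Fin k) : ℕ) = (t : ℕ) := rfl
      have ht' : ((low ⟨a', t'⟩ : Fin k) : ℕ) = (t' : ℕ) := rfl
      have h1 : (t : ℕ) ≤ (a : ℕ) := Nat.lt_succ_iff.1 t.2
      have h2 : (t' : ℕ) ≤ (a' : ℕ) := Nat.lt_succ_iff.1 t'.2
      have haa : (a : ℕ) = (a' : ℕ) ∧ (t : ℕ) = (t' : ℕ) := by
        rcases this with ⟨hu, hw⟩ | ⟨hu, hw⟩
        · have e1 := congrArg Fin.val hu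
          have e2 := congrArg Fin.val hw
          simp only [he_inl, he_inr, ht, ht'] at e1 e2
          omega
        · have e1 := congrArg Fin.val hu
          have e2 := congrArg Fin.val hw
          simp only [he_inl, he_inr, ht, ht'] at e1 e2
          omega
      obtain ⟨ha, htv⟩ := haa
      have ha' : a = a' := Fin.val_injective ha
      subst ha'
      have : t = t' := Fin.val_injective htv
      subst this
      rfl
    · exfalso
      rcases pair_eq hMe with ⟨hu, -⟩ | ⟨-, hw⟩
      · have := congrArg Fin.val hu
        simp only [he_inl, he_inr] at this
        have := (low ⟨a, t⟩).2
        omega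
      · have := congrArg Fin.val hw
        simp only [he_inl, he_inr] at this
        have := a.2
        omega
    · exfalso
      rcases pair_eq hMe with ⟨hu, -⟩ | ⟨hu, -⟩
      · have := congrArg Fin.val hu
        simp only [he_inl, he_inr] at this
        have := (low ⟨a', t'⟩).2
        omega
      · have := congrArg Fin.val hu
        simp only [he_inl, he_inr] at this
        have := a'.2
        omega
    · rcases pair_eq hMe with ⟨hu, hw⟩ | ⟨hu, hw⟩
      · have e1 := congrArg Fin.val hu
        have e2 := congrArg Fin.val hw
        simp only [he_inl, he_inr] at e1 e2
        have : w = w' := Fin.val_injective (by omega)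
        have : j = j' := Fin.val_injective e2
        simp_all
      · exfalso
        have e1 := congrArg Fin.val hu
        simp only [he_inl, he_inr] at e1
        have := j'.2
        omega
  have hψv : ∀ j, ψ (v j) = monomial (M j) (1 : K) := by
    rintro (p | ⟨w, j⟩) <;>
      simp only [v, map_mul, hpsi_g, M] <;>
      simp only [show ∀ u : Fin n, (X u : MvPolynomial (Fin n) K) = monomial (Finsupp.single u 1) 1
          from fun u => rfl, monomial_mul, one_mul]
  have li_v : LinearIndependent K v := by
    apply LinearIndependent.of_comp ψ.toLinearMap
    have : (⇑ψ.toLinearMap ∘ v) = fun j => monomial (M j) (1 : K) := by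
      funext j; exact hψv j
    rw [this]
    have : (fun j => monomial (M j) (1 : K)) = ⇑(basisMonomials (Fin n) K) ∘ M := by
      funext j; simp [coe_basisMonomials]
    rw [this]
    exact (basisMonomials (Fin n) K).linearIndependent.comp M Minj
  rw [← hv_span, finrank_span_eq_card li_v]
  have hcard : Fintype.card J = (∑ a : Fin k, ((a : ℕ) + 1)) + (n - k) * k := by
    simp [J, Fintype.card_sigma]
  have hsum2 : (∑ a : Fin k, ((a : ℕ) + 1)) * 2 = k * k + k := by
    rw [Fin.sum_univ_eq_sum_range (fun i => i + 1) k, Finset.sum_add_distrib,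
      Finset.sum_const, Finset.card_range, smul_eq_mul, mul_one, add_mul,
      Finset.sum_range_id_mul_two]
    cases k with
    | zero => simp
    | succ s =>
      simp only [Nat.succ_sub_one]
      ring
  have hC : k.choose 2 * 2 = k * (k - 1) := two_choose k
  have h2 : k * k = k * (k - 1) + k := by
    cases k with
    | zero => simp
    | succ s =>
      simp only [Nat.succ_sub_one]
      ring
  have hS : (∑ a : Fin k, ((a : ℕ) + 1)) = k.choose 2 + k := by
    have h3 : (∑ a : Fin k, ((a : ℕ) + 1)) * 2 = (k.choose 2 + k) * 2 := by
      rw [hsum2, add_mul, hC]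
      omega
    exact Nat.eq_of_mul_eq_mul_right two_pos h3
  have hgoal : k * n = (k.choose 2 + k + (n - k) * k) + k.choose 2 := by
    have h1 : k * n = k * k + k * (n - k) := by
      rw [← Nat.mul_add, Nat.add_sub_cancel' hkn]
    have h4 : k * (n - k) = (n - k) * k := Nat.mul_comm _ _
    have h5 : k.choose 2 + k.choose 2 = k * (k - 1) := by omega
    omega
  rw [hcard, hS]
  exact (Nat.sub_eq_of_eq_add hgoal).symm
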